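/- arXiv:1702.01347 — 2 statements merged into one kernel-verified Lean document; each statement's English description precedes it below -/
import Mathlib

section
/- Let (X, μ) be a measure space and let r, R, φ : X → ℝ be measurable functions with R, φ ∈ L⁴(μ). If the function x ↦ (−(r(x)+R(x)+φ(x))³ + φ(x)³)·r(x) is integrable with respect to μ, then ∫_X (−(r+R+φ)³ + φ³)·r dμ ≤ ‖R‖_{L⁴(μ)}⁴ + 3‖R‖_{L⁴(μ)}²·‖φ‖_{L⁴(μ)}². -/
open MeasureTheory ENNReal

lemma Dpos_aux (a b : ℝ) :
    0 ≤ 3*a^6+12*a^5*b+30*a^4*b^2+48*a^3*b^3+51*a^2*b^4+24*a*b^5+12*b^6 := by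
  nlinarith [sq_nonneg (a^3+2*a^2*b+3*a*b^2+2*b^3), sq_nonneg (a*b^2+b^3),
    sq_nonneg (a*b^2-b^3), sq_nonneg (a^2*b+a*b^2)]

lemma ptwise_aux (a b c : ℝ) : (-(a+b+c)^3 + c^3) * a ≤ b^4 + 3*b^2*c^2 := by
  rcases eq_or_ne (a^2+a*b+b^2) 0 with h | h
  · have ha : a = 0 := by nlinarith [sq_nonneg (a+b), sq_nonneg (a-b), sq_nonneg a, sq_nonneg b]
    have hb : b = 0 := by nlinarith [sq_nonneg (a+b), sq_nonneg (a-b), sq_nonneg a, sq_nonneg b]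
    subst ha; subst hb; ring_nf; positivity
  · have hA : 0 < a^2+a*b+b^2 :=
      lt_of_le_of_ne (by nlinarith [sq_nonneg (2*a+b), sq_nonneg b]) (Ne.symm h)
    nlinarith [sq_nonneg (6*(a^2+a*b+b^2)*c + 3*a*(a+b)^2), Dpos_aux a b, mul_pos hA hA]

lemma keypow_aux {X : Type*} [MeasurableSpace X] {μ : Measure X} {f : X → ℝ} {n : ℕ}
    (hn : n ≠ 0) (he : Even n) (hf : MemLp f (n : ℝ≥0∞) μ) :
    Integrable (fun x => (f x)^n) μ ∧
      ∫ x, (f x)^n ∂μ = (eLpNorm f (n : ℝ≥0∞) μ).toReal ^ n := by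
  have hp1 : ((n : ℝ≥0∞)) ≠ 0 := by exact_mod_cast hn
  have hp2 : ((n : ℝ≥0∞)) ≠ ⊤ := ENNReal.natCast_ne_top n
  have htr : ((n : ℝ≥0∞)).toReal = (n : ℝ) := by simp
  have hi := hf.integrable_norm_rpow hp1 hp2
  rw [htr] at hi
  have heq : (fun x => ‖f x‖ ^ (n : ℝ)) = fun x => (f x)^n := by
    funext x
    rw [Real.rpow_natCast, Real.norm_eq_abs, he.pow_abs]
  rw [heq] at hi
  refine ⟨hi, ?_⟩
  have h2 := hf.eLpNorm_eq_integral_rpow_norm hp1 hp2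
  rw [htr] at h2
  have hIn : 0 ≤ ∫ a, ‖f a‖ ^ (n:ℝ) ∂μ := by
    apply integral_nonneg; intro x; positivity
  rw [h2, ENNReal.toReal_ofReal (by positivity)]
  have hconv : ∫ a, ‖f a‖ ^ (n:ℝ) ∂μ = ∫ x, (f x)^n ∂μ := by rw [heq]
  rw [hconv] at hIn ⊢
  rw [← Real.rpow_natCast ((∫ x, (f x)^n ∂μ) ^ ((n:ℝ))⁻¹) n, ← Real.rpow_mul hIn,
    inv_mul_cancel₀ (by exact_mod_cast hn), Real.rpow_one]

theorem integrated_cubic_stability {X : Type*} [MeasurableSpace X] (μ : Measure X)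
    (r R φ : X → ℝ) (hr : Measurable r) (hR : Measurable R) (hφ : Measurable φ)
    (hR4 : MemLp R 4 μ) (hφ4 : MemLp φ 4 μ)
    (hint : Integrable (fun x => (-(r x + R x + φ x)^3 + (φ x)^3) * r x) μ) :
    ∫ x, (-(r x + R x + φ x)^3 + (φ x)^3) * r x ∂μ ≤
      (eLpNorm R 4 μ).toReal^4 +
        3 * (eLpNorm R 4 μ).toReal^2 * (eLpNorm φ 4 μ).toReal^2 := by
  have hpqr : (1:ℝ≥0∞)/2 = 1/4 + 1/4 := by
    rw [ENNReal.div_add_div_same,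
      ENNReal.div_eq_div_iff (by norm_num) (by norm_num) (by norm_num) (by norm_num)]
    norm_num
  have hprod : MemLp (R • φ) 2 μ := hφ4.smul hR4 (hpqr := ⟨by simpa only [one_div] using hpqr.symm⟩)
  have hc4 : ((4:ℕ) : ℝ≥0∞) = 4 := by norm_num
  have hc2 : ((2:ℕ) : ℝ≥0∞) = 2 := by norm_num
  have hR' : MemLp R ((4:ℕ) : ℝ≥0∞) μ := by rw [hc4]; exact hR4
  have hp' : MemLp (R • φ) ((2:ℕ) : ℝ≥0∞) μ := by rw [hc2]; exact hprod
  obtain ⟨hiR, heR⟩ := keypow_aux (by norm_num) (by decide) hR'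
  obtain ⟨hip, hep⟩ := keypow_aux (by norm_num) (by decide) hp'
  rw [hc4] at heR
  rw [hc2] at hep
  have hb : Integrable (fun x => R x^4 + 3*((R • φ) x)^2) μ := hiR.add (hip.const_mul 3)
  have hmono : ∫ x, (-(r x + R x + φ x)^3 + (φ x)^3) * r x ∂μ ≤
      ∫ x, (R x^4 + 3*((R • φ) x)^2) ∂μ := by
    refine integral_mono hint hb fun x => ?_
    simp only [Pi.smul_apply, smul_eq_mul, Pi.mul_apply]
    nlinarith [ptwise_aux (r x) (R x) (φ x), sq_nonneg (R x * φ x)]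
  have hsplit : ∫ x, (R x^4 + 3*((R • φ) x)^2) ∂μ =
      (∫ x, R x^4 ∂μ) + 3 * ∫ x, ((R • φ) x)^2 ∂μ := by
    rw [integral_add hiR (hip.const_mul 3), integral_const_mul 3 _]
  have hhold : eLpNorm (R • φ) 2 μ ≤ eLpNorm R 4 μ * eLpNorm φ 4 μ :=
    eLpNorm_smul_le_mul_eLpNorm hφ4.1 hR4.1 (hpqr := ⟨by simpa only [one_div] using hpqr.symm⟩)
  have hfin : eLpNorm R 4 μ * eLpNorm φ 4 μ ≠ ⊤ :=
    ENNReal.mul_ne_top hR4.eLpNorm_ne_top hφ4.eLpNorm_ne_top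
  have htr : (eLpNorm (R • φ) 2 μ).toReal ≤ (eLpNorm R 4 μ).toReal * (eLpNorm φ 4 μ).toReal := by
    rw [← ENNReal.toReal_mul]
    exact ENNReal.toReal_mono hfin hhold
  have hnn : 0 ≤ (eLpNorm (R • φ) 2 μ).toReal := ENNReal.toReal_nonneg
  have hnnR : 0 ≤ (eLpNorm R 4 μ).toReal := ENNReal.toReal_nonneg
  have hnnφ : 0 ≤ (eLpNorm φ 4 μ).toReal := ENNReal.toReal_nonneg
  calc ∫ x, (-(r x + R x + φ x)^3 + (φ x)^3) * r x ∂μ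
      ≤ (∫ x, R x^4 ∂μ) + 3 * ∫ x, ((R • φ) x)^2 ∂μ := by rw [← hsplit]; exact hmono
    _ = (eLpNorm R 4 μ).toReal^4 + 3 * (eLpNorm (R • φ) 2 μ).toReal^2 := by rw [heR, hep]
    _ ≤ (eLpNorm R 4 μ).toReal^4 +
        3 * (eLpNorm R 4 μ).toReal^2 * (eLpNorm φ 4 μ).toReal^2 := by nlinarith
end

section
/- For every positive integer k and every real h > 0, 2k² · ∫₀^h (1 − e^{−2sk²})² (1 − e^{−2k²(h−s)})² ds ≤ 8hk²e^{−2hk²} + (2hk² + 3)e^{−4hk²} + 2hk² − 3. -/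
/-- Explicit integral bound in the proof of Lemma 3.6 of the paper. -/
theorem OU_bridge_trace_integral_bound (k : ℕ) (hk : 0 < k) (h : ℝ) (hh : 0 < h) :
    2 * (k:ℝ)^2 * ∫ s in (0:ℝ)..h,
        (1 - Real.exp (-2 * s * (k:ℝ)^2))^2 * (1 - Real.exp (-2 * (k:ℝ)^2 * (h - s)))^2 ≤
      8 * h * (k:ℝ)^2 * Real.exp (-2 * h * (k:ℝ)^2)
        + (2 * h * (k:ℝ)^2 + 3) * Real.exp (-4 * h * (k:ℝ)^2)
        + 2 * h * (k:ℝ)^2 - 3 := by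
  set b : ℝ := (k:ℝ)^2 with hb
  have hbpos : (0:ℝ) < b := by
    have : (0:ℝ) < (k:ℝ) := by exact_mod_cast hk
    positivity
  have hb' : b ≠ 0 := ne_of_gt hbpos
  set w : ℝ := Real.exp (-2*b*h) with hw
  have hwne : w ≠ 0 := Real.exp_ne_zero _
  set F : ℝ → ℝ := fun s =>
    (1 + 4*w + w^2)*s + ((2+2*w)/(2*b)) * Real.exp (-2*b*s)
      + ((-2*w-2*w^2)/(2*b)) * Real.exp (2*b*s)
      + (-1/(4*b)) * Real.exp (-4*b*s) + (w^2/(4*b)) * Real.exp (4*b*s) with hF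
  have hderiv : ∀ s ∈ Set.uIcc (0:ℝ) h, HasDerivAt F
      ((1 - Real.exp (-2 * s * b))^2 * (1 - Real.exp (-2 * b * (h - s)))^2) s := by
    intro s _
    have d1 : HasDerivAt (fun s : ℝ => -2*b*s) (-2*b) s := by
      simpa using (hasDerivAt_id s).const_mul (-2*b)
    have d2 : HasDerivAt (fun s : ℝ => 2*b*s) (2*b) s := by
      simpa using (hasDerivAt_id s).const_mul (2*b)
    have d3 : HasDerivAt (fun s : ℝ => -4*b*s) (-4*b) s := by
      simpa using (hasDerivAt_id s).const_mul (-4*b)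
    have d4 : HasDerivAt (fun s : ℝ => 4*b*s) (4*b) s := by
      simpa using (hasDerivAt_id s).const_mul (4*b)
    have dlin : HasDerivAt (fun s : ℝ => (1 + 4*w + w^2)*s) (1 + 4*w + w^2) s := by
      simpa using (hasDerivAt_id s).const_mul (1 + 4*w + w^2)
    have D : HasDerivAt F
        ((1 + 4*w + w^2)
          + ((2+2*w)/(2*b)) * (Real.exp (-2*b*s) * (-2*b))
          + ((-2*w-2*w^2)/(2*b)) * (Real.exp (2*b*s) * (2*b))
          + (-1/(4*b)) * (Real.exp (-4*b*s) * (-4*b))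
          + (w^2/(4*b)) * (Real.exp (4*b*s) * (4*b))) s := by
      exact ((((dlin.add (d1.exp.const_mul ((2+2*w)/(2*b)))).add
        (d2.exp.const_mul ((-2*w-2*w^2)/(2*b)))).add
        (d3.exp.const_mul (-1/(4*b)))).add (d4.exp.const_mul (w^2/(4*b))))
    convert D using 1
    have e1 : Real.exp (-2 * b * (h - s)) = w * Real.exp (2*b*s) := by
      rw [hw, ← Real.exp_add]; ring_nf
    have e2 : Real.exp (-4*b*s) = Real.exp (-2*b*s) * Real.exp (-2*b*s) := by
      rw [← Real.exp_add]; ring_nf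
    have e5 : Real.exp (-2 * s * b) = Real.exp (-2*b*s) := by ring_nf
    have e6 : Real.exp (2*b*s) = (Real.exp (-2*b*s))⁻¹ := by
      rw [← Real.exp_neg]; ring_nf
    have e3 : Real.exp (4*b*s) = (Real.exp (-2*b*s))⁻¹ * (Real.exp (-2*b*s))⁻¹ := by
      rw [← e6, ← Real.exp_add]; ring_nf
    rw [e1, e2, e3, e5, e6]
    have hx : Real.exp (-2*b*s) ≠ 0 := Real.exp_ne_zero _
    field_simp
    ring
  have hcont : Continuous fun s : ℝ =>
      (1 - Real.exp (-2 * s * b))^2 * (1 - Real.exp (-2 * b * (h - s)))^2 := by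
    continuity
  have hint : (∫ s in (0:ℝ)..h,
      (1 - Real.exp (-2 * s * b))^2 * (1 - Real.exp (-2 * b * (h - s)))^2) = F h - F 0 :=
    intervalIntegral.integral_eq_sub_of_hasDerivAt hderiv (hcont.intervalIntegrable 0 h)
  rw [hint]
  have f1 : Real.exp (-2 * h * b) = w := by rw [hw]; ring_nf
  have f2 : Real.exp (-4 * h * b) = w^2 := by
    rw [hw, sq, ← Real.exp_add]; ring_nf
  have f3 : Real.exp (-4*b*h) = w^2 := by
    rw [hw, sq, ← Real.exp_add]; ring_nf
  have f4 : Real.exp (2*b*h) = w⁻¹ := by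
    rw [hw, ← Real.exp_neg]; ring_nf
  have f5 : Real.exp (4*b*h) = w⁻¹ * w⁻¹ := by
    rw [← f4, ← Real.exp_add]; ring_nf
  have key : 2 * b * (F h - F 0) =
      8 * h * b * w + (2 * h * b + 3) * w^2 + 2 * h * b - 3 := by
    simp only [hF]
    rw [f3, f4, f5, ← hw]
    simp only [mul_zero, Real.exp_zero]
    field_simp
    ring
  rw [f1, f2]
  rw [show (2:ℝ) * b * (F h - F 0) = 2 * b * (F h - F 0) from rfl] at key
  linarith [key]
end
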